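/- If Boolean functions f,g : {0,1}^{m+1} → Z_2 form a mixed Type-II/III complementary array pair of size 2^{(m)}×2 (with x_0 the Type-III variable), then there exist e_0,...,e_m, c_0,...,c_m, c, c' ∈ Z_2 such that f(x,x_0) = Σ_{1≤i<j≤m} x_i x_j + x_0·Σ_{i=1}^m e_i x_i + Σ_{i=0}^m c_i x_i + c and g(x,x_0) = f(x,x_0) + Σ_{i=1}^m x_i + e_0 x_0 + c'. -/

import Mathlib

open MvPolynomial Finset

/-- Generating function `F(z_1,…,z_m,z_0)` of a Boolean function on `{0,1}^{m+1}`,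
where the last variable plays the role of `x_0` (the Type-III variable). -/
noncomputable def genFun {n : ℕ} (f : (Fin n → ZMod 2) → ZMod 2) :
    MvPolynomial (Fin n) ℤ :=
  ∑ x : Fin n → ZMod 2,
    MvPolynomial.C ((-1 : ℤ) ^ (f x).val) * ∏ i, MvPolynomial.X i ^ (x i).val

/-- `F(z, -z_0)`: the generating function with the Type-III indeterminate negated. -/
noncomputable def genFunNegLast {m : ℕ} (f : (Fin (m + 1) → ZMod 2) → ZMod 2) :
    MvPolynomial (Fin (m + 1)) ℤ :=
  ∑ x : Fin (m + 1) → ZMod 2,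
    MvPolynomial.C ((-1 : ℤ) ^ (f x).val) *
      ∏ i, (if i = Fin.last m then -MvPolynomial.X i else MvPolynomial.X i) ^ (x i).val

/-- `(f,g)` is a mixed Type-II/III complementary array pair of size `2^{(m)}×2`,
the last variable being the Type-III one:
`F(z,z_0)F(z,-z_0) + G(z,z_0)G(z,-z_0) = 2(1-z_0^2)∏_{k=1}^m (1+z_k^2)`. -/
noncomputable def IsTypeIIIIIPair {m : ℕ} (f g : (Fin (m + 1) → ZMod 2) → ZMod 2) : Prop :=
  genFun f * genFunNegLast f + genFun g * genFunNegLast g =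
    2 * (1 - MvPolynomial.X (Fin.last m) ^ 2) *
      ∏ k : Fin m, (1 + MvPolynomial.X k.castSucc ^ 2)

namespace TypeIIAux

lemma zmod2_cases : ∀ t : ZMod 2, t = 0 ∨ t = 1 := by decide

lemma neg_one_pow_add_one : ∀ a : ZMod 2,
    ((-1 : ℤ)) ^ ((a + 1).val) = -((-1 : ℤ)) ^ a.val := by decide

lemma neg_one_pow_inj' : ∀ a b : ZMod 2,
    ((-1 : ℤ)) ^ a.val = ((-1 : ℤ)) ^ b.val → a = b := by decide

lemma neg_one_pow_inj {a b : ZMod 2}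
    (h : ((-1 : ℤ)) ^ a.val = ((-1 : ℤ)) ^ b.val) : a = b := neg_one_pow_inj' a b h

lemma two_eq_zero : (2 : ZMod 2) = 0 := by decide

noncomputable def dv {n : ℕ} (x : Fin n → ZMod 2) : Fin n →₀ ℕ :=
  ∑ i, Finsupp.single i ((x i).val)

lemma dv_apply {n : ℕ} (x : Fin n → ZMod 2) (j : Fin n) : dv x j = (x j).val := by
  classical
  rw [dv, Finsupp.finset_sum_apply]
  simp [Finsupp.single_apply]

lemma dv_injective {n : ℕ} : Function.Injective (dv (n := n)) := by
  intro x y h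
  funext j
  have h2 : (x j).val = (y j).val := by
    rw [← dv_apply x j, ← dv_apply y j, h]
  exact ZMod.val_injective 2 h2

lemma prod_X_pow_univ {n : ℕ} (d : Fin n → ℕ) :
    (∏ i, (MvPolynomial.X i : MvPolynomial (Fin n) ℤ) ^ d i) =
      MvPolynomial.monomial (∑ i, Finsupp.single i (d i)) 1 := by
  classical
  have : ∀ s : Finset (Fin n),
      (∏ i ∈ s, (MvPolynomial.X i : MvPolynomial (Fin n) ℤ) ^ d i) =
        MvPolynomial.monomial (∑ i ∈ s, Finsupp.single i (d i)) 1 := by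
    intro s
    induction s using Finset.induction_on with
    | empty => simp
    | @insert _ _ h ih =>
        rw [Finset.prod_insert h, Finset.sum_insert h, ih, X_pow_eq_monomial,
          monomial_mul, one_mul]
  exact this univ

lemma genFun_eq_sum_monomial {n : ℕ} (f : (Fin n → ZMod 2) → ZMod 2) :
    genFun f = ∑ x : Fin n → ZMod 2,
      MvPolynomial.monomial (dv x) ((-1 : ℤ) ^ (f x).val) := by
  unfold genFun
  refine Finset.sum_congr rfl fun x _ => ?_
  rw [prod_X_pow_univ fun i => (x i).val, C_mul_monomial, mul_one]
  rfl

lemma coeff_genFun {n : ℕ} (f : (Fin n → ZMod 2) → ZMod 2) (x : Fin n → ZMod 2) :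
    MvPolynomial.coeff (dv x) (genFun f) = (-1 : ℤ) ^ (f x).val := by
  classical
  rw [genFun_eq_sum_monomial, MvPolynomial.coeff_sum]
  have : ∀ y : Fin n → ZMod 2,
      MvPolynomial.coeff (dv x) (MvPolynomial.monomial (dv y) ((-1 : ℤ) ^ (f y).val)) =
        if y = x then (-1 : ℤ) ^ (f y).val else 0 := by
    intro y
    rw [MvPolynomial.coeff_monomial]
    congr 1
    simp only [eq_iff_iff]
    exact ⟨fun h => dv_injective h, fun h => by rw [h]⟩
  simp only [this]
  simp

lemma genFun_inj {n : ℕ} {u v : (Fin n → ZMod 2) → ZMod 2}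
    (h : genFun u = genFun v) : ∀ x, u x = v x := by
  intro x
  have := congrArg (MvPolynomial.coeff (dv x)) h
  rw [coeff_genFun, coeff_genFun] at this
  exact neg_one_pow_inj this

lemma genFun_ne_zero {n : ℕ} (u : (Fin n → ZMod 2) → ZMod 2) : genFun u ≠ 0 := by
  intro h
  have := congrArg (MvPolynomial.coeff (dv (fun _ => 0))) h
  rw [coeff_genFun] at this
  simp only [MvPolynomial.coeff_zero] at this
  exact pow_ne_zero _ (by norm_num : (-1 : ℤ) ≠ 0) this

lemma genFun_add_one {n : ℕ} (u : (Fin n → ZMod 2) → ZMod 2) :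
    genFun (fun x => u x + 1) = -genFun u := by
  unfold genFun
  rw [← Finset.sum_neg_distrib]
  refine Finset.sum_congr rfl fun x _ => ?_
  rw [neg_one_pow_add_one, map_neg, neg_mul]


-- to be appended inside namespace
section Psi
variable {m : ℕ}

noncomputable def psi (m : ℕ) :
    MvPolynomial (Fin (m + 1)) ℤ →ₐ[ℤ] Polynomial (MvPolynomial (Fin m) ℤ) :=
  (MvPolynomial.optionEquivLeft ℤ (Fin m)).toAlgHom.comp
    (MvPolynomial.rename (finSuccEquiv' (Fin.last m)))

lemma psi_X_last : psi m (MvPolynomial.X (Fin.last m)) = Polynomial.X := by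
  simp [psi, finSuccEquiv'_at, MvPolynomial.optionEquivLeft_X_none]

lemma psi_X_castSucc (j : Fin m) :
    psi m (MvPolynomial.X j.castSucc) = Polynomial.C (MvPolynomial.X j) := by
  simp [psi, finSuccEquiv'_below (Fin.castSucc_lt_last j), MvPolynomial.optionEquivLeft_X_some]

lemma psi_C (r : ℤ) : psi m (MvPolynomial.C r) = Polynomial.C (MvPolynomial.C r) := by
  simp [psi, MvPolynomial.optionEquivLeft_C]

/-- restriction of a boolean function on `Fin (m+1)` by fixing the last input to `t` -/
def res {m : ℕ} (f : (Fin (m + 1) → ZMod 2) → ZMod 2) (t : ZMod 2) :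
    (Fin m → ZMod 2) → ZMod 2 := fun x => f (Fin.snoc x t)

/-- the snoc equivalence specialised to our setting -/
def snocE (m : ℕ) : (Fin m → ZMod 2) × ZMod 2 ≃ (Fin (m + 1) → ZMod 2) where
  toFun p := Fin.snoc p.1 p.2
  invFun y := (fun j => y j.castSucc, y (Fin.last m))
  left_inv p := by
    refine Prod.ext ?_ ?_
    · funext j; simp
    · simp
  right_inv y := by
    funext i
    refine Fin.lastCases ?_ ?_ i
    · simp
    · intro j; simp

lemma val_zero2 : ((0 : ZMod 2)).val = 0 := rfl
lemma val_one2 : ((1 : ZMod 2)).val = 1 := rfl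

lemma sum_zmod2 {M : Type*} [AddCommMonoid M] (h : ZMod 2 → M) :
    (∑ t : ZMod 2, h t) = h 0 + h 1 := by
  rw [show (Finset.univ : Finset (ZMod 2)) = {0, 1} from by decide]
  rw [Finset.sum_insert (by decide), Finset.sum_singleton]

lemma psi_term (a : ℤ) (x : Fin m → ZMod 2) (t : ZMod 2) :
    psi m (MvPolynomial.C a * ∏ i, MvPolynomial.X i ^ ((Fin.snoc x t : Fin (m+1) → ZMod 2) i).val)
      = Polynomial.C (MvPolynomial.C a * ∏ j, MvPolynomial.X j ^ (x j).val) *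
          Polynomial.X ^ t.val := by
  rw [map_mul, psi_C, map_prod]
  rw [Fin.prod_univ_castSucc]
  have h1 : ∀ j : Fin m,
      psi m (MvPolynomial.X (Fin.castSucc j) ^ ((Fin.snoc x t : Fin (m+1) → ZMod 2) j.castSucc).val)
        = Polynomial.C (MvPolynomial.X j ^ (x j).val) := by
    intro j
    rw [map_pow, psi_X_castSucc]
    simp [Fin.snoc_castSucc]
  have h2 : psi m (MvPolynomial.X (Fin.last m) ^ ((Fin.snoc x t : Fin (m+1) → ZMod 2) (Fin.last m)).val)
      = Polynomial.X ^ t.val := by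
    rw [map_pow, psi_X_last]
    simp [Fin.snoc_last]
  rw [Finset.prod_congr rfl fun j _ => h1 j, h2, ← map_prod, map_mul]
  ring

lemma psi_genFun (f : (Fin (m + 1) → ZMod 2) → ZMod 2) :
    psi m (genFun f) = Polynomial.C (genFun (res f 0)) + Polynomial.C (genFun (res f 1)) * Polynomial.X := by
  unfold genFun
  rw [map_sum]
  rw [← Equiv.sum_comp (snocE m)]
  rw [Fintype.sum_prod_type]
  have : ∀ x : Fin m → ZMod 2, ∀ t : ZMod 2,
      psi m (MvPolynomial.C ((-1:ℤ) ^ (f (snocE m (x, t))).val) *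
        ∏ i, MvPolynomial.X i ^ ((snocE m (x, t)) i).val)
      = Polynomial.C (MvPolynomial.C ((-1:ℤ) ^ ((res f t) x).val) *
          ∏ j, MvPolynomial.X j ^ (x j).val) * Polynomial.X ^ t.val := by
    intro x t
    exact psi_term _ x t
  simp only [this]
  simp only [sum_zmod2 (M := Polynomial (MvPolynomial (Fin m) ℤ))]
  rw [Finset.sum_add_distrib]
  congr 1
  · simp only [val_zero2, pow_zero, mul_one]
    rw [← map_sum]
  · simp only [val_one2, pow_one]
    rw [← Finset.sum_mul, ← map_sum]

end Psi
section Split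
variable {m : ℕ}

lemma psi_term_neg (a : ℤ) (x : Fin m → ZMod 2) (t : ZMod 2) :
    psi m (MvPolynomial.C a *
        ∏ i, (if i = Fin.last m then -MvPolynomial.X i else MvPolynomial.X i) ^
          ((Fin.snoc x t : Fin (m+1) → ZMod 2) i).val)
      = Polynomial.C (MvPolynomial.C a * ∏ j, MvPolynomial.X j ^ (x j).val) *
          (-Polynomial.X) ^ t.val := by
  rw [map_mul, psi_C, map_prod]
  rw [Fin.prod_univ_castSucc]
  have h1 : ∀ j : Fin m,
      psi m ((if (j.castSucc : Fin (m+1)) = Fin.last m then -MvPolynomial.X j.castSucc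
          else MvPolynomial.X j.castSucc) ^ ((Fin.snoc x t : Fin (m+1) → ZMod 2) j.castSucc).val)
        = Polynomial.C (MvPolynomial.X j ^ (x j).val) := by
    intro j
    rw [if_neg (Fin.castSucc_lt_last j).ne, map_pow, psi_X_castSucc]
    simp [Fin.snoc_castSucc]
  have h2 : psi m ((if (Fin.last m : Fin (m+1)) = Fin.last m then -MvPolynomial.X (Fin.last m)
        else MvPolynomial.X (Fin.last m)) ^ ((Fin.snoc x t : Fin (m+1) → ZMod 2) (Fin.last m)).val)
      = (-Polynomial.X) ^ t.val := by
    rw [if_pos rfl, map_pow, map_neg, psi_X_last]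
    simp [Fin.snoc_last]
  rw [Finset.prod_congr rfl fun j _ => h1 j, h2, ← map_prod, map_mul]
  ring

lemma psi_genFunNegLast (f : (Fin (m + 1) → ZMod 2) → ZMod 2) :
    psi m (genFunNegLast f)
      = Polynomial.C (genFun (res f 0)) - Polynomial.C (genFun (res f 1)) * Polynomial.X := by
  unfold genFunNegLast
  rw [map_sum]
  rw [← Equiv.sum_comp (snocE m)]
  rw [Fintype.sum_prod_type]
  have : ∀ x : Fin m → ZMod 2, ∀ t : ZMod 2,
      psi m (MvPolynomial.C ((-1:ℤ) ^ (f (snocE m (x, t))).val) *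
        ∏ i, (if i = Fin.last m then -MvPolynomial.X i else MvPolynomial.X i) ^
          ((snocE m (x, t)) i).val)
      = Polynomial.C (MvPolynomial.C ((-1:ℤ) ^ ((res f t) x).val) *
          ∏ j, MvPolynomial.X j ^ (x j).val) * (-Polynomial.X) ^ t.val := by
    intro x t
    exact psi_term_neg _ x t
  simp only [this]
  simp only [sum_zmod2 (M := Polynomial (MvPolynomial (Fin m) ℤ))]
  rw [Finset.sum_add_distrib, sub_eq_add_neg]
  congr 1
  · simp only [val_zero2, pow_zero, mul_one]
    rw [← map_sum]
    rfl
  · simp only [val_one2, pow_one]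
    rw [← Finset.sum_mul, ← map_sum]
    show Polynomial.C (genFun (res f 1)) * -Polynomial.X
      = -(Polynomial.C (genFun (res f 1)) * Polynomial.X)
    ring

/-- the RHS polynomial `2∏(1+z_k²)` -/
noncomputable def Pn (n : ℕ) : MvPolynomial (Fin n) ℤ :=
  2 * ∏ k : Fin n, (1 + MvPolynomial.X k ^ 2)

lemma Pn_ne_zero (n : ℕ) : Pn n ≠ 0 := by
  intro h
  have := congrArg (MvPolynomial.eval (fun _ => (0 : ℤ))) h
  simp only [Pn, map_mul, map_prod, map_add, map_one, map_pow, MvPolynomial.eval_X,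
    map_ofNat, map_zero] at this
  norm_num at this

lemma psi_Pn : psi m (Pn (m + 1)) = Polynomial.C (Pn m) * (1 + Polynomial.X ^ 2) := by
  unfold Pn
  rw [map_mul, map_prod, Fin.prod_univ_castSucc]
  have h1 : ∀ j : Fin m, psi m (1 + MvPolynomial.X j.castSucc ^ 2)
      = Polynomial.C (1 + MvPolynomial.X j ^ 2) := by
    intro j
    rw [map_add, map_one, map_pow, psi_X_castSucc, map_add, map_one, map_pow]
  have h2 : psi m (1 + MvPolynomial.X (Fin.last m) ^ 2) = 1 + Polynomial.X ^ 2 := by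
    rw [map_add, map_one, map_pow, psi_X_last]
  rw [Finset.prod_congr rfl fun j _ => h1 j, h2, ← map_prod, map_ofNat, map_mul]
  rw [show ((2 : Polynomial (MvPolynomial (Fin m) ℤ))) = Polynomial.C 2 from
    (map_ofNat Polynomial.C 2).symm]
  ring

/-- The mixed RHS `2(1-z0²)∏(1+z_k²)` under `psi`. -/
lemma psi_rhs_mixed :
    psi m (2 * (1 - MvPolynomial.X (Fin.last m) ^ 2) *
        ∏ k : Fin m, (1 + MvPolynomial.X k.castSucc ^ 2))
      = Polynomial.C (Pn m) * (1 - Polynomial.X ^ 2) := by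
  rw [map_mul, map_mul, map_sub, map_one, map_pow, psi_X_last, map_prod]
  have h1 : ∀ j : Fin m, psi m (1 + MvPolynomial.X j.castSucc ^ 2)
      = Polynomial.C (1 + MvPolynomial.X j ^ 2) := by
    intro j
    rw [map_add, map_one, map_pow, psi_X_castSucc, map_add, map_one, map_pow]
  rw [Finset.prod_congr rfl fun j _ => h1 j, ← map_prod, map_ofNat]
  rw [show ((2 : Polynomial (MvPolynomial (Fin m) ℤ))) = Polynomial.C 2 from
    (map_ofNat Polynomial.C 2).symm]
  unfold Pn
  rw [map_mul, map_ofNat]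
  ring

/-- coefficient extraction for quadratics in `Polynomial R` -/
lemma quad_coeffs {R : Type*} [CommRing R] {a0 a1 a2 b0 b1 b2 : R}
    (h : Polynomial.C a0 + Polynomial.C a1 * Polynomial.X + Polynomial.C a2 * Polynomial.X ^ 2
      = Polynomial.C b0 + Polynomial.C b1 * Polynomial.X + Polynomial.C b2 * Polynomial.X ^ 2) :
    a0 = b0 ∧ a1 = b1 ∧ a2 = b2 := by
  refine ⟨?_, ?_, ?_⟩
  · have := congrArg (fun p => Polynomial.coeff p 0) h
    simpa using this
  · have := congrArg (fun p => Polynomial.coeff p 1) h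
    simpa using this
  · have := congrArg (fun p => Polynomial.coeff p 2) h
    simpa using this

lemma poly_splitII {R : Type*} [CommRing R] {A B Cc D P : R}
    (h : (Polynomial.C A + Polynomial.C B * Polynomial.X) *
          (Polynomial.C A + Polynomial.C B * Polynomial.X) +
        (Polynomial.C Cc + Polynomial.C D * Polynomial.X) *
          (Polynomial.C Cc + Polynomial.C D * Polynomial.X)
      = Polynomial.C P * (1 + Polynomial.X ^ 2)) :
    A * A + Cc * Cc = P ∧ A * B + Cc * D + (A * B + Cc * D) = 0 ∧ B * B + D * D = P := by
  have h' : Polynomial.C (A * A + Cc * Cc)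
      + Polynomial.C (A * B + Cc * D + (A * B + Cc * D)) * Polynomial.X
      + Polynomial.C (B * B + D * D) * Polynomial.X ^ 2
      = Polynomial.C P + Polynomial.C (0 : R) * Polynomial.X + Polynomial.C P * Polynomial.X ^ 2 := by
    refine Eq.trans ?_ (h.trans ?_)
    · simp only [map_add, map_mul]
      ring
    · simp only [map_zero]
      ring
  obtain ⟨e0, e1, e2⟩ := quad_coeffs h'
  exact ⟨e0, e1, e2⟩

lemma poly_splitIII {R : Type*} [CommRing R] {A B Cc D P : R}
    (h : (Polynomial.C A + Polynomial.C B * Polynomial.X) *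
          (Polynomial.C A - Polynomial.C B * Polynomial.X) +
        (Polynomial.C Cc + Polynomial.C D * Polynomial.X) *
          (Polynomial.C Cc - Polynomial.C D * Polynomial.X)
      = Polynomial.C P * (1 - Polynomial.X ^ 2)) :
    A * A + Cc * Cc = P ∧ B * B + D * D = P := by
  have h' : Polynomial.C (A * A + Cc * Cc)
      + Polynomial.C (0 : R) * Polynomial.X
      + Polynomial.C (-(B * B + D * D)) * Polynomial.X ^ 2
      = Polynomial.C P + Polynomial.C (0 : R) * Polynomial.X + Polynomial.C (-P) * Polynomial.X ^ 2 := by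
    refine Eq.trans ?_ (h.trans ?_)
    · simp only [map_add, map_mul, map_zero, map_neg]
      ring
    · simp only [map_zero, map_neg]
      ring
  obtain ⟨e0, _, e2⟩ := quad_coeffs h'
  exact ⟨e0, neg_inj.mp e2⟩

end Split

section Class

/-- the Type-II condition for a pair of boolean functions -/
noncomputable def TypeII {n : ℕ} (u v : (Fin n → ZMod 2) → ZMod 2) : Prop :=
  genFun u * genFun u + genFun v * genFun v = Pn n

lemma typeII_split {m : ℕ} {u v : (Fin (m + 1) → ZMod 2) → ZMod 2} (h : TypeII u v) :
    TypeII (res u 0) (res v 0) ∧ TypeII (res u 1) (res v 1) ∧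
      genFun (res u 0) * genFun (res u 1) + genFun (res v 0) * genFun (res v 1) = 0 := by
  have h' := congrArg (psi m) h
  rw [map_add, map_mul, map_mul, psi_genFun, psi_genFun, psi_Pn] at h'
  obtain ⟨e0, e1, e2⟩ := poly_splitII h'
  refine ⟨e0, e2, ?_⟩
  have h2 : (2 : MvPolynomial (Fin m) ℤ) *
      (genFun (res u 0) * genFun (res u 1) + genFun (res v 0) * genFun (res v 1)) = 0 := by
    linear_combination e1
  rcases mul_eq_zero.mp h2 with h3 | h3
  · exact absurd h3 two_ne_zero
  · exact h3

lemma pair_step {R : Type*} [CommRing R] [IsDomain R] {A B C D P : R}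
    (hB : B ≠ 0) (hP : P ≠ 0)
    (h0 : A * A + B * B = P) (h1 : C * C + D * D = P) (hx : A * C + B * D = 0) :
    (C = B ∧ D = -A) ∨ (C = -B ∧ D = A) := by
  have hsq : (C - B) * (C + B) * P = 0 := by
    linear_combination (-(C*C))*h0 + B*B*h1 + (A*C - B*D)*hx
  have hCB : (C - B) * (C + B) = 0 := by
    rcases mul_eq_zero.mp hsq with h | h
    · exact h
    · exact absurd h hP
  rcases mul_eq_zero.mp hCB with h | h
  · left
    have hC : C = B := by linear_combination h
    refine ⟨hC, ?_⟩
    have hAD : B * (A + D) = 0 := by linear_combination hx - A * h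
    rcases mul_eq_zero.mp hAD with h' | h'
    · exact absurd h' hB
    · linear_combination h'
  · right
    have hC : C = -B := by linear_combination h
    refine ⟨hC, ?_⟩
    have hAD : B * (D - A) = 0 := by linear_combination hx - A * h
    rcases mul_eq_zero.mp hAD with h' | h'
    · exact absurd h' hB
    · linear_combination h'

/-- key consequence at the level of boolean functions -/
lemma step_functions {m : ℕ} {u v : (Fin (m + 1) → ZMod 2) → ZMod 2} (h : TypeII u v) :
    TypeII (res u 0) (res v 0) ∧
    ∃ τ : ZMod 2, (∀ x, res u 1 x = res v 0 x + τ) ∧ (∀ x, res v 1 x = res u 0 x + τ + 1) := by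
  obtain ⟨h0, _, hx⟩ := typeII_split h
  refine ⟨h0, ?_⟩
  have := pair_step (genFun_ne_zero (res v 0)) (Pn_ne_zero m) h0 ?h1 hx
  case h1 =>
    obtain ⟨_, h1, _⟩ := typeII_split h
    exact h1
  rcases this with ⟨hC, hD⟩ | ⟨hC, hD⟩
  · refine ⟨0, ?_, ?_⟩
    · intro x
      have := genFun_inj hC x
      simpa using this
    · intro x
      rw [← genFun_add_one] at hD
      have := genFun_inj hD x
      rw [this]
      ring
  · refine ⟨1, ?_, ?_⟩
    · intro x
      rw [← genFun_add_one] at hC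
      have := genFun_inj hC x
      rw [this]
    · intro x
      have := genFun_inj hD x
      rw [this]
      have h2 : (1 : ZMod 2) + 1 = 0 := by decide
      rw [add_assoc, h2, add_zero]

end Class

section Quad

/-- the standard quadratic form `∑_{i<j} x_i x_j` -/
def Q (n : ℕ) (x : Fin n → ZMod 2) : ZMod 2 :=
  ∑ p ∈ Finset.univ.filter (fun p : Fin n × Fin n => p.1 < p.2), x p.1 * x p.2

lemma Q_snoc {n : ℕ} (x : Fin n → ZMod 2) (t : ZMod 2) :
    Q (n + 1) (Fin.snoc x t) = Q n x + (∑ j, x j) * t := by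
  unfold Q
  rw [Finset.sum_filter, Finset.sum_filter]
  rw [Fintype.sum_prod_type, Fintype.sum_prod_type]
  rw [Fin.sum_univ_castSucc (n := n)]
  have inner1 : ∀ i : Fin n,
      (∑ j : Fin (n + 1), if (i.castSucc : Fin (n+1)) < j
          then (Fin.snoc x t : Fin (n+1) → ZMod 2) i.castSucc *
            (Fin.snoc x t : Fin (n+1) → ZMod 2) j else 0)
        = (∑ j : Fin n, if i < j then x i * x j else 0) + x i * t := by
    intro i
    rw [Fin.sum_univ_castSucc (n := n)]
    congr 1
    · refine Finset.sum_congr rfl fun j _ => ?_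
      simp [Fin.snoc_castSucc, Fin.castSucc_lt_castSucc_iff]
    · rw [if_pos (Fin.castSucc_lt_last i)]
      simp [Fin.snoc_castSucc, Fin.snoc_last]
  have inner2 : (∑ j : Fin (n + 1), if (Fin.last n : Fin (n+1)) < j
      then (Fin.snoc x t : Fin (n+1) → ZMod 2) (Fin.last n) *
        (Fin.snoc x t : Fin (n+1) → ZMod 2) j else 0) = 0 := by
    refine Finset.sum_eq_zero fun j _ => ?_
    rw [if_neg (by exact not_lt.mpr (Fin.le_last j))]
  rw [Finset.sum_congr rfl fun i _ => inner1 i, inner2, add_zero, Finset.sum_add_distrib]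
  rw [← Finset.sum_mul]

lemma sum_snoc {n : ℕ} (c : Fin n → ZMod 2) (cl : ZMod 2) (x : Fin n → ZMod 2) (t : ZMod 2) :
    (∑ i : Fin (n + 1), (Fin.snoc c cl : Fin (n+1) → ZMod 2) i *
        (Fin.snoc x t : Fin (n+1) → ZMod 2) i)
      = (∑ j, c j * x j) + cl * t := by
  rw [Fin.sum_univ_castSucc]
  simp [Fin.snoc_castSucc, Fin.snoc_last]

lemma sum_snoc' {n : ℕ} (x : Fin n → ZMod 2) (t : ZMod 2) :
    (∑ i : Fin (n + 1), (Fin.snoc x t : Fin (n+1) → ZMod 2) i) = (∑ j, x j) + t := by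
  rw [Fin.sum_univ_castSucc]
  simp [Fin.snoc_castSucc, Fin.snoc_last]

lemma snoc_self {n : ℕ} (y : Fin (n + 1) → ZMod 2) :
    y = Fin.snoc (fun j => y (Fin.castSucc j)) (y (Fin.last n)) := by
  funext i
  refine Fin.lastCases ?_ ?_ i
  · simp
  · intro j; simp

theorem classII : ∀ (n : ℕ) (u v : (Fin n → ZMod 2) → ZMod 2), TypeII u v →
    ∃ (c : Fin n → ZMod 2) (a b : ZMod 2),
      (∀ x, u x = Q n x + (∑ i, c i * x i) + a) ∧
      (∀ x, v x = u x + (∑ i, x i) + b) := by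
  intro n
  induction n with
  | zero =>
      intro u v _
      refine ⟨fun i => i.elim0, u (fun i => i.elim0), u (fun i => i.elim0) + v (fun i => i.elim0),
        ?_, ?_⟩
      · intro x
        have hx : x = fun i => i.elim0 := funext fun i => i.elim0
        subst hx
        simp [Q]
      · intro x
        have hx : x = fun i => i.elim0 := funext fun i => i.elim0
        subst hx
        have h2 : (2 : ZMod 2) = 0 := by decide
        simp only [Finset.univ_eq_empty, Finset.sum_empty, add_zero]
        linear_combination (-(u fun i => i.elim0)) * h2
  | succ n ih =>
      intro u v h
      obtain ⟨h0, τ, hu1, hv1⟩ := step_functions h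
      obtain ⟨c, a, b, hu0, hv0⟩ := ih _ _ h0
      refine ⟨Fin.snoc c (b + τ), a, b, ?_, ?_⟩
      · intro y
        rw [snoc_self y]
        set x : Fin n → ZMod 2 := fun j => y (Fin.castSucc j) with hxdef
        set t : ZMod 2 := y (Fin.last n) with htdef
        rw [Q_snoc, sum_snoc]
        rcases zmod2_cases t with ht | ht
        · rw [ht]
          have : u (Fin.snoc x 0) = res u 0 x := rfl
          rw [this, hu0 x]
          ring
        · rw [ht]
          have : u (Fin.snoc x 1) = res u 1 x := rfl
          rw [this, hu1 x, hv0 x, hu0 x]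
          ring
      · intro y
        rw [snoc_self y]
        set x : Fin n → ZMod 2 := fun j => y (Fin.castSucc j) with hxdef
        set t : ZMod 2 := y (Fin.last n) with htdef
        rw [sum_snoc']
        rcases zmod2_cases t with ht | ht
        · rw [ht]
          have h1 : v (Fin.snoc x 0) = res v 0 x := rfl
          have h2 : u (Fin.snoc x 0) = res u 0 x := rfl
          rw [h1, h2, hv0 x]
          ring
        · rw [ht]
          have h1 : v (Fin.snoc x 1) = res v 1 x := rfl
          have h2 : u (Fin.snoc x 1) = res u 1 x := rfl
          rw [h1, h2, hv1 x, hu1 x, hv0 x]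
          have h2 : (2 : ZMod 2) = 0 := by decide
          linear_combination (-((∑ j, x j) + b)) * h2

end Quad

end TypeIIAux

open TypeIIAux in
theorem typeIIIII_pair_is_standard (m : ℕ) (f g : (Fin (m + 1) → ZMod 2) → ZMod 2)
    (h : IsTypeIIIIIPair f g) :
    ∃ (e : Fin m → ZMod 2) (e0 : ZMod 2) (c : Fin (m + 1) → ZMod 2) (cc c' : ZMod 2),
      (∀ y, f y = (∑ p ∈ Finset.univ.filter (fun p : Fin m × Fin m => p.1 < p.2),
          y p.1.castSucc * y p.2.castSucc)
        + y (Fin.last m) * (∑ i, e i * y i.castSucc)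
        + (∑ i, c i * y i) + cc) ∧
      (∀ y, g y = f y + (∑ i : Fin m, y i.castSucc) + e0 * y (Fin.last m) + c') := by
  have h2 : (2 : ZMod 2) = 0 := by decide
  unfold IsTypeIIIIIPair at h
  have h' := congrArg (psi m) h
  rw [map_add, map_mul, map_mul, psi_genFun, psi_genFun, psi_genFunNegLast, psi_genFunNegLast,
    psi_rhs_mixed] at h'
  obtain ⟨hII0, hII1⟩ := poly_splitIII h'
  obtain ⟨c, a, b, hf0, hg0⟩ := classII m (res f 0) (res g 0) hII0
  obtain ⟨c', a', b', hf1, hg1⟩ := classII m (res f 1) (res g 1) hII1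
  refine ⟨fun i => c i + c' i, b + b', Fin.snoc c (a + a'), a, b, ?_, ?_⟩
  · intro y
    rw [snoc_self y]
    set x : Fin m → ZMod 2 := fun j => y (Fin.castSucc j) with hxdef
    set t : ZMod 2 := y (Fin.last m) with htdef
    have hQ : (∑ p ∈ Finset.univ.filter (fun p : Fin m × Fin m => p.1 < p.2),
        (Fin.snoc x t : Fin (m+1) → ZMod 2) p.1.castSucc *
          (Fin.snoc x t : Fin (m+1) → ZMod 2) p.2.castSucc) = Q m x := by
      unfold Q
      refine Finset.sum_congr rfl fun p _ => ?_
      simp [Fin.snoc_castSucc]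
    have hE : (∑ i, (c i + c' i) * (Fin.snoc x t : Fin (m+1) → ZMod 2) i.castSucc)
        = (∑ i, c i * x i) + ∑ i, c' i * x i := by
      simp [Fin.snoc_castSucc, add_mul, Finset.sum_add_distrib]
    rw [hQ, hE, sum_snoc, Fin.snoc_last]
    rcases zmod2_cases t with ht | ht
    · rw [ht]
      have hr : f (Fin.snoc x (0 : ZMod 2)) = res f 0 x := rfl
      rw [hr, hf0 x]
      ring
    · rw [ht]
      have hr : f (Fin.snoc x (1 : ZMod 2)) = res f 1 x := rfl
      rw [hr, hf1 x]
      linear_combination (-((∑ i, c i * x i) + a)) * h2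
  · intro y
    rw [snoc_self y]
    set x : Fin m → ZMod 2 := fun j => y (Fin.castSucc j) with hxdef
    set t : ZMod 2 := y (Fin.last m) with htdef
    have hS : (∑ i : Fin m, (Fin.snoc x t : Fin (m+1) → ZMod 2) i.castSucc) = ∑ i, x i := by
      simp [Fin.snoc_castSucc]
    rw [hS, Fin.snoc_last]
    rcases zmod2_cases t with ht | ht
    · rw [ht]
      have hr : g (Fin.snoc x (0 : ZMod 2)) = res g 0 x := rfl
      have hr2 : f (Fin.snoc x (0 : ZMod 2)) = res f 0 x := rfl
      rw [hr, hr2, hg0 x]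
      ring
    · rw [ht]
      have hr : g (Fin.snoc x (1 : ZMod 2)) = res g 1 x := rfl
      have hr2 : f (Fin.snoc x (1 : ZMod 2)) = res f 1 x := rfl
      rw [hr, hr2, hg1 x]
      linear_combination (-b) * h2
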